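/- Let n \ge 2 be an integer and let \xi_1, \ldots, \xi_{\lfloor n/2 \rfloor} be nonnegative real numbers, not all zero. Then the polynomial \ell(x) = \sum_{i=1}^{\lfloor n/2 \rfloor} \xi_i x^i (1+x)^{n-2i} has only real zeros if and only if the polynomial \xi(x) = \sum_{i=1}^{\lfloor n/2 \rfloor} \xi_i x^i has only real zeros. -/

import Mathlib

open Polynomial Finset

private lemma aux_sum_eq (n : ℕ) (ξ : ℕ → ℝ) (z : ℂ) (hz : 1 + z ≠ 0) :
    ∑ i ∈ Finset.Icc 1 (n / 2), (ξ i : ℂ) * z ^ i * (1 + z) ^ (n - 2 * i)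
      = (1 + z) ^ n * ∑ i ∈ Finset.Icc 1 (n / 2), (ξ i : ℂ) * (z / (1 + z) ^ 2) ^ i := by
  rw [Finset.mul_sum]
  refine Finset.sum_congr rfl fun i hi => ?_
  have h2i : 2 * i ≤ n := by
    have h1 := (Finset.mem_Icc.mp hi).2
    have h := Nat.mul_div_le n 2
    omega
  have hn : (1 + z) ^ n = (1 + z) ^ (n - 2 * i) * (1 + z) ^ (2 * i) := by
    rw [← pow_add, Nat.sub_add_cancel h2i]
  rw [div_pow, ← pow_mul, hn]
  have hne : ((1 + z) ^ (2 * i) : ℂ) ≠ 0 := pow_ne_zero _ hz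
  field_simp

private lemma aux_nonpos (n : ℕ) (ξ : ℕ → ℝ) (hpos : ∀ i ∈ Finset.Icc 1 (n / 2), 0 ≤ ξ i)
    (hne : ∃ i ∈ Finset.Icc 1 (n / 2), ξ i ≠ 0) (r : ℝ)
    (hr : ∑ i ∈ Finset.Icc 1 (n / 2), ξ i * r ^ i = 0) : r ≤ 0 := by
  by_contra h
  push_neg at h
  have : 0 < ∑ i ∈ Finset.Icc 1 (n / 2), ξ i * r ^ i := by
    obtain ⟨i₀, hi₀, hξ⟩ := hne
    refine Finset.sum_pos' (fun i hi => mul_nonneg (hpos i hi) (pow_nonneg h.le i)) ⟨i₀, hi₀, ?_⟩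
    exact mul_pos (lt_of_le_of_ne (hpos i₀ hi₀) (Ne.symm hξ)) (pow_pos h i₀)
  linarith

private lemma aux_real_of_eq (r : ℝ) (hr : r ≤ 0) (z : ℂ)
    (h : (r : ℂ) * (1 + z) ^ 2 = z) : z.im = 0 := by
  by_contra hb
  set a := z.re
  set b := z.im
  have him : r * (2 * (1 + a) * b) = b := by
    have := congrArg Complex.im h
    simp [Complex.add_im, Complex.mul_im, pow_two, Complex.add_re, Complex.mul_re] at this
    linarith [this]
  have hre : r * ((1 + a) ^ 2 - b ^ 2) = a := by
    have := congrArg Complex.re h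
    simp [Complex.add_im, Complex.mul_im, pow_two, Complex.add_re, Complex.mul_re] at this
    nlinarith [this]
  have h2 : 2 * r * (1 + a) = 1 := by
    have hb0 : b * (2 * r * (1 + a) - 1) = 0 := by ring_nf; nlinarith [him]
    rcases mul_eq_zero.mp hb0 with h | h
    · exact absurd h hb
    · linarith
  nlinarith [sq_nonneg (r * b), sq_nonneg b, h2, hre]

private lemma aux_exists_root (w : ℂ) (hw : w ≠ 0) :
    ∃ z : ℂ, 1 + z ≠ 0 ∧ w * (1 + z) ^ 2 = z := by
  obtain ⟨s, hs⟩ := Complex.isAlgClosed.exists_pow_nat_eq (1 - 4 * w) two_pos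
  have h2w : (2 : ℂ) * w ≠ 0 := mul_ne_zero two_ne_zero hw
  have h1z : 1 + (1 - 2 * w + s) / (2 * w) = (1 + s) / (2 * w) := by
    field_simp; ring
  refine ⟨(1 - 2 * w + s) / (2 * w), ?_, ?_⟩
  · rw [h1z]
    intro h
    have hs1 : 1 + s = 0 := (div_eq_zero_iff.mp h).resolve_right h2w
    have hsm : s = -1 := by linear_combination hs1
    rw [hsm] at hs
    exact hw (by linear_combination (1/4 : ℂ) * hs)
  · rw [h1z]
    field_simp
    linear_combination hs

theorem stmt_8 (n : ℕ) (hn : 2 ≤ n) (ξ : ℕ → ℝ)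
    (hpos : ∀ i ∈ Finset.Icc 1 (n / 2), 0 ≤ ξ i)
    (hne : ∃ i ∈ Finset.Icc 1 (n / 2), ξ i ≠ 0) :
    ((∀ z : ℂ, aeval z (∑ i ∈ Finset.Icc 1 (n / 2),
          C (ξ i) * X ^ i * (1 + X) ^ (n - 2 * i)) = 0 → z.im = 0) ↔
      (∀ z : ℂ, aeval z (∑ i ∈ Finset.Icc 1 (n / 2), C (ξ i) * X ^ i) = 0 → z.im = 0)) := by
  have hevalL : ∀ z : ℂ, aeval z (∑ i ∈ Finset.Icc 1 (n / 2),
      C (ξ i) * X ^ i * (1 + X) ^ (n - 2 * i))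
      = ∑ i ∈ Finset.Icc 1 (n / 2), (ξ i : ℂ) * z ^ i * (1 + z) ^ (n - 2 * i) := by
    intro z; simp [map_sum]
  have hevalX : ∀ z : ℂ, aeval z (∑ i ∈ Finset.Icc 1 (n / 2), C (ξ i) * X ^ i)
      = ∑ i ∈ Finset.Icc 1 (n / 2), (ξ i : ℂ) * z ^ i := by
    intro z; simp [map_sum]
  constructor
  · -- ℓ real-rooted → ξ real-rooted
    intro hL w hw
    rw [hevalX] at hw
    by_contra him
    have hw0 : w ≠ 0 := fun h => him (by simp [h])
    obtain ⟨z, h1z, hkey⟩ := aux_exists_root w hw0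
    have hwz : z / (1 + z) ^ 2 = w := by
      rw [eq_comm, eq_div_iff (pow_ne_zero _ h1z)]
      exact hkey
    have hLz : aeval z (∑ i ∈ Finset.Icc 1 (n / 2),
        C (ξ i) * X ^ i * (1 + X) ^ (n - 2 * i)) = 0 := by
      rw [hevalL, aux_sum_eq n ξ z h1z, hwz, hw, mul_zero]
    have hzim : z.im = 0 := hL z hLz
    have hx : z = (z.re : ℂ) := by
      apply Complex.ext <;> simp [hzim]
    apply him
    rw [← hwz, hx]
    rw [show (1:ℂ) + (z.re:ℂ) = ((1 + z.re : ℝ) : ℂ) by push_cast; ring,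
      ← Complex.ofReal_pow, ← Complex.ofReal_div, Complex.ofReal_im]
  · -- ξ real-rooted → ℓ real-rooted
    intro hX z hz
    rw [hevalL] at hz
    by_cases h1z : 1 + z = 0
    · have : z = -1 := by linear_combination h1z
      simp [this]
    · set w := z / (1 + z) ^ 2 with hwdef
      have hΞw : ∑ i ∈ Finset.Icc 1 (n / 2), (ξ i : ℂ) * w ^ i = 0 := by
        have := hz
        rw [aux_sum_eq n ξ z h1z] at this
        exact (mul_eq_zero.mp this).resolve_left (pow_ne_zero _ h1z)
      have hwim : w.im = 0 := by
        apply hX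
        rw [hevalX]
        exact hΞw
      have hwre : w = (w.re : ℂ) := by
        apply Complex.ext <;> simp [hwim]
      set r := w.re
      have hrsum : ∑ i ∈ Finset.Icc 1 (n / 2), ξ i * r ^ i = 0 := by
        have h2 : ∑ i ∈ Finset.Icc 1 (n / 2), (ξ i : ℂ) * (r : ℂ) ^ i = 0 := by
          rw [← hwre]; exact hΞw
        exact_mod_cast h2
      have hr : r ≤ 0 := aux_nonpos n ξ hpos hne r hrsum
      have hzeq : (r : ℂ) * (1 + z) ^ 2 = z := by
        rw [← hwre, hwdef]
        field_simp
      exact aux_real_of_eq r hr z hzeq
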